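/- arXiv:1307.8139 — 2 statements merged into one kernel-verified Lean document; each statement's English description precedes it below -/
import Mathlib

section
/- Let d > 1 and C > 0 be real constants. There exists a constant K > 0 (depending only on d and C) such that for every set system (X, S) on a finite ground set X with |X| = n whose primal shatter function satisfies π_S(m) ≤ C·m^d for all 1 ≤ m ≤ n, and for every integer 1 ≤ δ ≤ n, every δ-separated subfamily P ⊆ S satisfies |P| ≤ K·(n/δ)^d. -/
open scoped symmDiff
open Finset

namespace HausslerPack

variable {α : Type} [DecidableEq α]

/-- The set of `B ∈ Q` such that `insert a B ∈ Q` too (and `a ∉ B`):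
these index the unit-distance edges of `Q` in direction `a`. -/
def cset (Q : Finset (Finset α)) (a : α) : Finset (Finset α) :=
  Q.filter (fun B => a ∉ B ∧ insert a B ∈ Q)

/-- "VC dimension of `Q` (as family on `A`) is at most `v`." -/
def shOK (A : Finset α) (Q : Finset (Finset α)) (v : ℕ) : Prop :=
  ∀ Z ⊆ A, (∀ W ⊆ Z, ∃ T ∈ Q, T ∩ Z = W) → Z.card ≤ v

lemma cset_empty_of_shOK0 {A : Finset α} {Q : Finset (Finset α)} (h : shOK A Q 0)
    {a : α} (ha : a ∈ A) : cset Q a = ∅ := by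
  rw [Finset.eq_empty_iff_forall_notMem]
  intro B hB
  simp only [cset, Finset.mem_filter] at hB
  obtain ⟨hBQ, haB, hiQ⟩ := hB
  have h1 := h {a} (by simpa using ha) ?_
  · simp at h1
  · intro W hW
    rcases Finset.subset_singleton_iff.mp hW with rfl | rfl
    · exact ⟨B, hBQ, by rw [Finset.inter_comm]; exact Finset.singleton_inter_of_notMem haB⟩
    · exact ⟨insert a B, hiQ, by
        rw [Finset.inter_comm]; exact Finset.singleton_inter_of_mem (Finset.mem_insert_self a B)⟩

/-- Haussler's unit-distance-graph edge bound. -/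
lemma edge_lemma (n : ℕ) : ∀ (A : Finset α), A.card = n → ∀ (v : ℕ) (Q : Finset (Finset α)),
    (∀ T ∈ Q, T ⊆ A) → shOK A Q v → (∑ a ∈ A, (cset Q a).card) ≤ v * Q.card := by
  induction n with
  | zero =>
    intro A hA v Q _ _
    rw [Finset.card_eq_zero.mp hA]
    simp
  | succ n ih =>
    intro A hA v Q hsub hsh
    obtain ⟨a₀, ha₀⟩ : A.Nonempty := Finset.card_pos.mp (by omega)
    set A' := A.erase a₀ with hA'def
    have hA'card : A'.card = n := by
      rw [hA'def, Finset.card_erase_of_mem ha₀, hA]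
      omega
    rcases v with _ | v
    · have hz : ∀ a ∈ A, (cset Q a).card = 0 := fun a ha => by
        rw [cset_empty_of_shOK0 hsh ha, Finset.card_empty]
      rw [Finset.sum_congr rfl hz]
      simp
    · -- main induction step, v.succ
      set Q₀ := Q.filter (fun T => a₀ ∉ T) with hQ₀def
      set Q₁' := (Q.filter (fun T => a₀ ∈ T)).image (fun T => T.erase a₀) with hQ₁'def
      set R := Q₀ ∩ Q₁' with hRdef
      set Q' := Q₀ ∪ Q₁' with hQ'def
      have haa : ∀ a ∈ A', a ≠ a₀ := fun a ha => Finset.ne_of_mem_erase ha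
      have memQ₀ : ∀ B : Finset α, B ∈ Q₀ ↔ B ∈ Q ∧ a₀ ∉ B := fun B => Finset.mem_filter
      have memQ₁' : ∀ B : Finset α, B ∈ Q₁' ↔ a₀ ∉ B ∧ insert a₀ B ∈ Q := by
        intro B
        constructor
        · intro hB
          obtain ⟨T, hT, rfl⟩ := Finset.mem_image.mp hB
          obtain ⟨hTQ, hTa⟩ := Finset.mem_filter.mp hT
          exact ⟨Finset.notMem_erase _ _, by rwa [Finset.insert_erase hTa]⟩
        · rintro ⟨hB, hiB⟩
          exact Finset.mem_image.mpr ⟨insert a₀ B,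
            Finset.mem_filter.mpr ⟨hiB, Finset.mem_insert_self _ _⟩,
            Finset.erase_insert hB⟩
      have hQ1card : Q₁'.card = (Q.filter (fun T => a₀ ∈ T)).card := by
        apply Finset.card_image_of_injOn
        intro T hT T' hT' hTT
        simp only at hTT
        have h1 := (Finset.mem_filter.mp (Finset.mem_coe.mp hT)).2
        have h2 := (Finset.mem_filter.mp (Finset.mem_coe.mp hT')).2
        rw [← Finset.insert_erase h1, ← Finset.insert_erase h2, hTT]
      have hcards : Q'.card + R.card = Q.card := by
        have hsplit := Finset.card_filter_add_card_filter_not (s := Q)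
          (p := fun T => a₀ ∈ T)
        rw [hQ'def, hRdef, Finset.card_union_add_card_inter, hQ1card, hQ₀def]
        omega
      have hsubQ' : ∀ T ∈ Q', T ⊆ A' := by
        intro T hT
        rcases Finset.mem_union.mp hT with h | h
        · obtain ⟨hTQ, hTa⟩ := (memQ₀ T).mp h
          exact Finset.subset_erase.mpr ⟨hsub T hTQ, hTa⟩
        · obtain ⟨hTa, hiT⟩ := (memQ₁' T).mp h
          refine Finset.subset_erase.mpr ⟨fun x hx => hsub _ hiT (Finset.mem_insert_of_mem hx), hTa⟩
      have hsubR : ∀ T ∈ R, T ⊆ A' := fun T hT =>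
        hsubQ' T (Finset.mem_union_left _ (Finset.mem_inter.mp hT).1)
      have hshQ' : shOK A' Q' (v+1) := by
        intro Z hZ hshat
        have ha₀Z : a₀ ∉ Z := fun h => Finset.notMem_erase a₀ A (hZ h)
        refine hsh Z (hZ.trans (Finset.erase_subset _ _)) ?_
        intro W hW
        obtain ⟨T, hT, hTZ⟩ := hshat W hW
        rcases Finset.mem_union.mp hT with h | h
        · exact ⟨T, ((memQ₀ T).mp h).1, hTZ⟩
        · obtain ⟨hTa, hiT⟩ := (memQ₁' T).mp h
          exact ⟨insert a₀ T, hiT, by rw [Finset.insert_inter_of_notMem ha₀Z, hTZ]⟩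
      have hshR : shOK A' R v := by
        intro Z hZ hshat
        have ha₀Z : a₀ ∉ Z := fun h => Finset.notMem_erase a₀ A (hZ h)
        have hins : (insert a₀ Z).card ≤ v + 1 := by
          refine hsh (insert a₀ Z) (Finset.insert_subset ha₀ (hZ.trans (Finset.erase_subset _ _))) ?_
          intro W hW
          have hWsub : W.erase a₀ ⊆ Z := by
            intro x hx
            have hx' := Finset.mem_of_mem_erase hx
            rcases Finset.mem_insert.mp (hW hx') with h | h
            · exact absurd h (Finset.ne_of_mem_erase hx)
            · exact h
          obtain ⟨T, hT, hTZ⟩ := hshat (W.erase a₀) hWsub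
          · have hTR := hT
            rw [hRdef, Finset.mem_inter] at hTR
            obtain ⟨hT0, hT1⟩ := hTR
            have hTa : a₀ ∉ T := ((memQ₀ T).mp hT0).2
            by_cases haW : a₀ ∈ W
            · refine ⟨insert a₀ T, ((memQ₁' T).mp hT1).2, ?_⟩
              rw [← Finset.insert_inter_distrib, hTZ, Finset.insert_erase haW]
            · refine ⟨T, ((memQ₀ T).mp hT0).1, ?_⟩
              rw [Finset.inter_insert_of_notMem hTa, hTZ, Finset.erase_eq_of_notMem haW]
        rw [Finset.card_insert_of_notMem ha₀Z] at hins
        omega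
      have claim1 : cset Q a₀ = R := by
        ext B
        rw [cset, Finset.mem_filter, hRdef, Finset.mem_inter, memQ₀, memQ₁']
        tauto
      have claim2 : ∀ a ∈ A', (cset Q a).card ≤ (cset Q' a).card + (cset R a).card := by
        intro a ha
        have hane : a ≠ a₀ := haa a ha
        set L := cset Q a with hLdef
        set L₀ := L.filter (fun B => a₀ ∉ B) with hL₀def
        set L₁ := L.filter (fun B => a₀ ∈ B) with hL₁def
        set I₁ := L₁.image (fun B => B.erase a₀) with hI₁def
        have memL : ∀ B : Finset α, B ∈ L ↔ B ∈ Q ∧ a ∉ B ∧ insert a B ∈ Q := by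
          intro B; rw [hLdef, cset, Finset.mem_filter]
        have hins_erase : ∀ (B : Finset α), insert a (B.erase a₀) = (insert a B).erase a₀ :=
          fun B => (Finset.erase_insert_of_ne hane).symm
        have h1 : L₀ ⊆ cset Q' a := by
          intro B hB
          obtain ⟨hBL, hBa₀⟩ := Finset.mem_filter.mp hB
          obtain ⟨hBQ, haB, hiQ⟩ := (memL B).mp hBL
          rw [cset, Finset.mem_filter]
          refine ⟨Finset.mem_union_left _ ((memQ₀ B).mpr ⟨hBQ, hBa₀⟩), haB,
            Finset.mem_union_left _ ((memQ₀ _).mpr ⟨hiQ, ?_⟩)⟩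
          simp only [Finset.mem_insert]
          rintro (h | h)
          · exact hane h.symm
          · exact hBa₀ h
        have h2 : I₁ ⊆ cset Q' a := by
          intro B hB
          obtain ⟨B', hB', rfl⟩ := Finset.mem_image.mp hB
          obtain ⟨hBL, hBa₀⟩ := Finset.mem_filter.mp hB'
          obtain ⟨hBQ, haB, hiQ⟩ := (memL B').mp hBL
          rw [cset, Finset.mem_filter]
          refine ⟨Finset.mem_union_right _ ((memQ₁' _).mpr
            ⟨Finset.notMem_erase _ _, by rwa [Finset.insert_erase hBa₀]⟩), ?_, ?_⟩
          · intro h; exact haB (Finset.mem_of_mem_erase h)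
          · rw [hins_erase B']
            refine Finset.mem_union_right _ ((memQ₁' _).mpr
              ⟨Finset.notMem_erase _ _, ?_⟩)
            rw [Finset.insert_erase (Finset.mem_insert_of_mem hBa₀)]
            exact hiQ
        have h3 : L₀ ∩ I₁ ⊆ cset R a := by
          intro B hB
          obtain ⟨hBL₀, hBI₁⟩ := Finset.mem_inter.mp hB
          obtain ⟨hBL, hBa₀⟩ := Finset.mem_filter.mp hBL₀
          obtain ⟨hBQ, haB, hiQ⟩ := (memL B).mp hBL
          obtain ⟨B', hB', hBe⟩ := Finset.mem_image.mp hBI₁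
          obtain ⟨hB'L, hB'a₀⟩ := Finset.mem_filter.mp hB'
          obtain ⟨hB'Q, haB', hiQ'⟩ := (memL B').mp hB'L
          have hBQ₁' : B ∈ Q₁' := Finset.mem_image.mpr ⟨B', Finset.mem_filter.mpr ⟨hB'Q, hB'a₀⟩, hBe⟩
          have ha₀iB : a₀ ∉ insert a B := by
            simp only [Finset.mem_insert]
            rintro (h | h)
            · exact hane h.symm
            · exact hBa₀ h
          have hiBQi : insert a B ∈ Q₁' := by
            refine (memQ₁' _).mpr ⟨ha₀iB, ?_⟩
            have : insert a₀ (insert a B) = insert a B' := by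
              rw [← hBe, hins_erase B', Finset.insert_erase]
              exact Finset.mem_insert_of_mem hB'a₀
            rw [this]; exact hiQ'
          rw [cset, Finset.mem_filter]
          exact ⟨Finset.mem_inter.mpr ⟨(memQ₀ B).mpr ⟨hBQ, hBa₀⟩, hBQ₁'⟩, haB,
            Finset.mem_inter.mpr ⟨(memQ₀ _).mpr ⟨hiQ, ha₀iB⟩, hiBQi⟩⟩
        have hL := Finset.card_filter_add_card_filter_not (s := L)
          (p := fun B => a₀ ∈ B)
        have hI₁card : I₁.card = L₁.card := by
          rw [hI₁def]
          apply Finset.card_image_of_injOn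
          intro T hT T' hT' hTT
          simp only at hTT
          have e1 := (Finset.mem_filter.mp (Finset.mem_coe.mp hT)).2
          have e2 := (Finset.mem_filter.mp (Finset.mem_coe.mp hT')).2
          rw [← Finset.insert_erase e1, ← Finset.insert_erase e2, hTT]
        have hcui := Finset.card_union_add_card_inter L₀ I₁
        have c1 : (L₀ ∪ I₁).card ≤ (cset Q' a).card :=
          Finset.card_le_card (Finset.union_subset h1 h2)
        have c2 : (L₀ ∩ I₁).card ≤ (cset R a).card := Finset.card_le_card h3
        simp only [hL₀def, hL₁def] at *
        omega
      calc ∑ a ∈ A, (cset Q a).card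
          = (cset Q a₀).card + ∑ a ∈ A', (cset Q a).card := by
            rw [hA'def]
            exact (Finset.add_sum_erase A (fun a => (cset Q a).card) ha₀).symm
        _ ≤ R.card + ∑ a ∈ A', ((cset Q' a).card + (cset R a).card) := by
            rw [claim1]
            exact Nat.add_le_add_left (Finset.sum_le_sum claim2) _
        _ = R.card + (∑ a ∈ A', (cset Q' a).card + ∑ a ∈ A', (cset R a).card) := by
            rw [Finset.sum_add_distrib]
        _ ≤ R.card + ((v+1) * Q'.card + v * R.card) := by
            have e1 := ih A' hA'card (v+1) Q' hsubQ' hshQ'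
            have e2 := ih A' hA'card v R hsubR hshR
            omega
        _ = (v+1) * Q.card := by rw [← hcards]; ring

/-- weight of a trace -/
def wgt (P : Finset (Finset α)) (A T : Finset α) : ℕ :=
  (P.filter (fun S => S ∩ A = T)).card

lemma wgt_le (P : Finset (Finset α)) (A T : Finset α) : wgt P A T ≤ P.card :=
  Finset.card_le_card (Finset.filter_subset _ _)

lemma sum_wgt (P : Finset (Finset α)) (A : Finset α) :
    ∑ T ∈ P.image (· ∩ A), wgt P A T = P.card :=
  (Finset.card_eq_sum_card_fiberwise (fun S hS => Finset.mem_image_of_mem _ hS)).symm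

lemma mem_image_of_wgt_pos {P : Finset (Finset α)} {A T : Finset α} (h : 1 ≤ wgt P A T) :
    T ∈ P.image (· ∩ A) := by
  obtain ⟨S, hS⟩ := Finset.card_pos.mp h
  obtain ⟨hSP, hST⟩ := Finset.mem_filter.mp hS
  exact Finset.mem_image.mpr ⟨S, hSP, hST⟩

lemma min_eq_card_filter {x y p : ℕ} (hx : x ≤ p) :
    min x y = ((Finset.Icc 1 p).filter (fun k => k ≤ x ∧ k ≤ y)).card := by
  have h : (Finset.Icc 1 p).filter (fun k => k ≤ x ∧ k ≤ y) = Finset.Icc 1 (min x y) := by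
    ext k
    simp only [Finset.mem_filter, Finset.mem_Icc]
    omega
  rw [h, Nat.card_Icc]
  omega

/-- combined weight in direction `a` -/
def mww (P : Finset (Finset α)) (A : Finset α) (a : α) : ℕ :=
  ∑ B ∈ P.image (· ∩ A.erase a), min (wgt P A B) (wgt P A (insert a B))

lemma sum_mww_le (v : ℕ) (A : Finset α) (P : Finset (Finset α))
    (hvc : ∀ Q ⊆ P.image (· ∩ A), shOK A Q v) :
    ∑ a ∈ A, mww P A a ≤ v * P.card := by
  classical
  set p := P.card with hpdef
  set Q := P.image (· ∩ A) with hQdef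
  set Qk : ℕ → Finset (Finset α) := fun k => Q.filter (fun T => k ≤ wgt P A T) with hQkdef
  have memQk : ∀ k T, T ∈ Qk k ↔ T ∈ Q ∧ k ≤ wgt P A T := by
    intro k T; rw [hQkdef]; exact Finset.mem_filter
  have step1 : ∀ a ∈ A, mww P A a = ∑ k ∈ Finset.Icc 1 p, (cset (Qk k) a).card := by
    intro a ha
    rw [mww]
    have e1 : ∀ B ∈ P.image (· ∩ A.erase a),
        min (wgt P A B) (wgt P A (insert a B))
          = ∑ k ∈ Finset.Icc 1 p, (if k ≤ wgt P A B ∧ k ≤ wgt P A (insert a B) then 1 else 0) := by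
      intro B _
      rw [min_eq_card_filter (wgt_le P A B), Finset.card_filter]
    rw [Finset.sum_congr rfl e1, Finset.sum_comm]
    refine Finset.sum_congr rfl ?_
    intro k hk
    have hk1 : 1 ≤ k := (Finset.mem_Icc.mp hk).1
    rw [← Finset.card_filter]
    congr 1
    ext B
    simp only [Finset.mem_filter, cset]
    constructor
    · rintro ⟨hBim, hkB, hkiB⟩
      have haB : a ∉ B := by
        obtain ⟨S, _, rfl⟩ := Finset.mem_image.mp hBim
        exact fun h => (Finset.notMem_erase a A) (Finset.mem_of_mem_inter_right h)
      exact ⟨(memQk k B).mpr ⟨mem_image_of_wgt_pos (le_trans hk1 hkB), hkB⟩, haB,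
        (memQk k _).mpr ⟨mem_image_of_wgt_pos (le_trans hk1 hkiB), hkiB⟩⟩
    · rintro ⟨hBQk, haB, hiBQk⟩
      have hkB := ((memQk k B).mp hBQk).2
      have hkiB := ((memQk k _).mp hiBQk).2
      refine ⟨?_, hkB, hkiB⟩
      obtain ⟨S, hSP, hSB⟩ := Finset.mem_image.mp (mem_image_of_wgt_pos (le_trans hk1 hkB))
      refine Finset.mem_image.mpr ⟨S, hSP, ?_⟩
      rw [Finset.inter_erase, hSB, Finset.erase_eq_of_notMem haB]
  have step2 : ∀ k ∈ Finset.Icc 1 p, (∑ a ∈ A, (cset (Qk k) a).card) ≤ v * (Qk k).card := by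
    intro k _
    refine edge_lemma A.card A rfl v (Qk k) ?_ (hvc (Qk k) (Finset.filter_subset _ _))
    intro T hT
    obtain ⟨S, _, rfl⟩ := Finset.mem_image.mp ((memQk k T).mp hT).1
    exact Finset.inter_subset_right
  have step3 : ∑ k ∈ Finset.Icc 1 p, (Qk k).card = p := by
    have e1 : ∀ k ∈ Finset.Icc 1 p, (Qk k).card
        = ∑ T ∈ Q, (if k ≤ wgt P A T then 1 else 0) := by
      intro k _
      rw [hQkdef, Finset.card_filter]
    rw [Finset.sum_congr rfl e1, Finset.sum_comm]
    have e2 : ∀ T ∈ Q, ∑ k ∈ Finset.Icc 1 p, (if k ≤ wgt P A T then 1 else 0) = wgt P A T := by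
      intro T hT
      rw [← Finset.card_filter]
      have h : (Finset.Icc 1 p).filter (fun k => k ≤ wgt P A T) = Finset.Icc 1 (wgt P A T) := by
        ext k
        simp only [Finset.mem_filter, Finset.mem_Icc]
        have h2 := wgt_le P A T
        have h3 : p = P.card := hpdef
        omega
      rw [h, Nat.card_Icc]
      omega
    rw [Finset.sum_congr rfl e2, hQdef, sum_wgt]
  calc ∑ a ∈ A, mww P A a = ∑ a ∈ A, ∑ k ∈ Finset.Icc 1 p, (cset (Qk k) a).card :=
        Finset.sum_congr rfl step1
    _ = ∑ k ∈ Finset.Icc 1 p, ∑ a ∈ A, (cset (Qk k) a).card := Finset.sum_comm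
    _ ≤ ∑ k ∈ Finset.Icc 1 p, v * (Qk k).card := Finset.sum_le_sum step2
    _ = v * p := by rw [← Finset.mul_sum, step3]

lemma perA' (X : Finset α) (P : Finset (Finset α)) (δ : ℕ)
    (hPX : ∀ S ∈ P, S ⊆ X)
    (hsep : ∀ S₁ ∈ P, ∀ S₂ ∈ P, S₁ ≠ S₂ → δ < (S₁ ∆ S₂).card)
    (A' : Finset α) :
    (δ + 1) * P.card ≤
      2 * (∑ a ∈ X \ A', mww P (insert a A') a)
        + (δ + 1) * (P.image (· ∩ A')).card := by
  classical
  have key : ∀ B ∈ P.image (· ∩ A'),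
      (δ + 1) * (P.filter (fun S => S ∩ A' = B)).card ≤
        2 * (∑ a ∈ X \ A',
          min (wgt P (insert a A') B) (wgt P (insert a A') (insert a B))) + (δ + 1) := by
    intro B hB
    set W := P.filter (fun S => S ∩ A' = B) with hWdef
    have memW : ∀ S : Finset α, S ∈ W ↔ S ∈ P ∧ S ∩ A' = B := fun S => Finset.mem_filter
    set t := W.card with htdef
    have haB : ∀ a, a ∉ A' → a ∉ B := by
      obtain ⟨S, _, rfl⟩ := Finset.mem_image.mp hB
      exact fun a ha h => ha (Finset.mem_of_mem_inter_right h)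
    have ht1 : 1 ≤ t := by
      obtain ⟨S, hSP, hSB⟩ := Finset.mem_image.mp hB
      exact Finset.card_pos.mpr ⟨S, (memW S).mpr ⟨hSP, hSB⟩⟩
    have f0 : ∀ a ∈ X \ A',
        wgt P (insert a A') B = (W.filter (fun S => a ∉ S)).card := by
      intro a ha
      obtain ⟨haX, haA'⟩ := Finset.mem_sdiff.mp ha
      rw [wgt]
      congr 1
      ext S
      simp only [Finset.mem_filter, hWdef]
      constructor
      · rintro ⟨hSP, h⟩
        have haS : a ∉ S := by
          intro haS
          exact haB a haA' (h ▸ Finset.mem_inter.mpr ⟨haS, Finset.mem_insert_self _ _⟩)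
        rw [Finset.inter_insert_of_notMem haS] at h
        exact ⟨⟨hSP, h⟩, haS⟩
      · rintro ⟨⟨hSP, h⟩, haS⟩
        exact ⟨hSP, by rw [Finset.inter_insert_of_notMem haS]; exact h⟩
    have f1 : ∀ a ∈ X \ A',
        wgt P (insert a A') (insert a B) = (W.filter (fun S => a ∈ S)).card := by
      intro a ha
      obtain ⟨haX, haA'⟩ := Finset.mem_sdiff.mp ha
      rw [wgt]
      congr 1
      ext S
      simp only [Finset.mem_filter, hWdef]
      constructor
      · rintro ⟨hSP, h⟩
        have haS : a ∈ S := by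
          have : a ∈ S ∩ insert a A' := h ▸ Finset.mem_insert_self _ _
          exact Finset.mem_of_mem_inter_left this
        have h2 : insert a (S ∩ A') = insert a B := by
          rw [Finset.insert_inter_distrib, Finset.insert_eq_self.mpr haS, h]
        have h3 : S ∩ A' = B := by
          have e1 : a ∉ S ∩ A' := fun hc => haA' (Finset.mem_of_mem_inter_right hc)
          have e2 : a ∉ B := haB a haA'
          rw [← Finset.erase_insert e1, h2, Finset.erase_insert e2]
        exact ⟨⟨hSP, h3⟩, haS⟩
      · rintro ⟨⟨hSP, h⟩, haS⟩
        refine ⟨hSP, ?_⟩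
        rw [← Finset.insert_eq_self.mpr haS, ← Finset.insert_inter_distrib, h]
    have f2 : ∀ a, (W.filter (fun S => a ∈ S)).card + (W.filter (fun S => a ∉ S)).card = t := by
      intro a
      exact Finset.card_filter_add_card_filter_not (p := fun S => a ∈ S)
    have f3 : ∀ a, (W.filter (fun S => a ∈ S)).card * (W.filter (fun S => a ∉ S)).card
        ≤ t * min ((W.filter (fun S => a ∉ S)).card) ((W.filter (fun S => a ∈ S)).card) := by
      intro a
      set x := (W.filter (fun S => a ∉ S)).card
      set y := (W.filter (fun S => a ∈ S)).card
      have h1 : y * x = min x y * max x y := by rw [min_mul_max]; ring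
      have h2 : max x y ≤ t := by
        have := f2 a
        rw [max_le_iff]
        omega
      calc y * x = min x y * max x y := h1
        _ ≤ min x y * t := Nat.mul_le_mul_left _ h2
        _ = t * min x y := by ring
    have f4 : ∑ a ∈ X \ A',
        ((W.filter (fun S => a ∈ S)).card * (W.filter (fun S => a ∉ S)).card)
        = ∑ S ∈ W, ∑ S' ∈ W, (S \ S').card := by
      have e1 : ∀ a ∈ X \ A',
          (W.filter (fun S => a ∈ S)).card * (W.filter (fun S => a ∉ S)).card
          = ∑ S ∈ W, ∑ S' ∈ W, (if a ∈ S ∧ a ∉ S' then 1 else 0) := by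
        intro a _
        rw [Finset.card_filter, Finset.card_filter, Finset.sum_mul_sum]
        refine Finset.sum_congr rfl fun S _ => Finset.sum_congr rfl fun S' _ => ?_
        by_cases h1 : a ∈ S <;> by_cases h2 : a ∈ S' <;> simp [h1, h2]
      rw [Finset.sum_congr rfl e1, Finset.sum_comm]
      refine Finset.sum_congr rfl fun S hS => ?_
      rw [Finset.sum_comm]
      refine Finset.sum_congr rfl fun S' hS' => ?_
      rw [← Finset.card_filter]
      congr 1
      ext x
      simp only [Finset.mem_filter, Finset.mem_sdiff]
      constructor
      · rintro ⟨_, h2, h3⟩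
        exact ⟨h2, h3⟩
      · rintro ⟨h2, h3⟩
        refine ⟨⟨hPX S ((memW S).mp hS).1 h2, ?_⟩, h2, h3⟩
        intro hxA'
        have hx1 : x ∈ S ∩ A' := Finset.mem_inter.mpr ⟨h2, hxA'⟩
        rw [((memW S).mp hS).2] at hx1
        have hx2 : x ∈ S' ∩ A' := by rw [((memW S').mp hS').2]; exact hx1
        exact h3 (Finset.mem_of_mem_inter_left hx2)
    have hsd : ∀ (S S' : Finset α), (S ∆ S').card = (S \ S').card + (S' \ S).card := by
      intro S S'
      rw [symmDiff_def, Finset.sup_eq_union]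
      exact Finset.card_union_of_disjoint disjoint_sdiff_sdiff
    have f5 : 2 * (∑ S ∈ W, ∑ S' ∈ W, (S \ S').card) = ∑ S ∈ W, ∑ S' ∈ W, (S ∆ S').card := by
      have hswap : ∑ S ∈ W, ∑ S' ∈ W, (S' \ S).card = ∑ S ∈ W, ∑ S' ∈ W, (S \ S').card :=
        Finset.sum_comm
      calc 2 * (∑ S ∈ W, ∑ S' ∈ W, (S \ S').card)
          = (∑ S ∈ W, ∑ S' ∈ W, (S \ S').card) + (∑ S ∈ W, ∑ S' ∈ W, (S' \ S).card) := by
            rw [hswap]; ring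
        _ = ∑ S ∈ W, ((∑ S' ∈ W, (S \ S').card) + (∑ S' ∈ W, (S' \ S).card)) := by
            rw [Finset.sum_add_distrib]
        _ = ∑ S ∈ W, ∑ S' ∈ W, ((S \ S').card + (S' \ S).card) := by
            refine Finset.sum_congr rfl fun S _ => ?_
            rw [Finset.sum_add_distrib]
        _ = ∑ S ∈ W, ∑ S' ∈ W, (S ∆ S').card := by
            exact Finset.sum_congr rfl fun S _ => Finset.sum_congr rfl fun S' _ => (hsd S S').symm
    have f6 : (δ + 1) * (t * (t - 1)) ≤ ∑ S ∈ W, ∑ S' ∈ W, (S ∆ S').card := by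
      have hper : ∀ S ∈ W, (δ + 1) * (t - 1) ≤ ∑ S' ∈ W, (S ∆ S').card := by
        intro S hS
        calc (δ + 1) * (t - 1) = ∑ _S' ∈ W.erase S, (δ + 1) := by
              rw [Finset.sum_const, Finset.card_erase_of_mem hS, smul_eq_mul, mul_comm]
          _ ≤ ∑ S' ∈ W.erase S, (S ∆ S').card := by
              refine Finset.sum_le_sum fun S' hS' => ?_
              have hne : S ≠ S' := fun h => (Finset.ne_of_mem_erase hS') h.symm
              exact hsep S ((memW S).mp hS).1 S' ((memW S').mp (Finset.mem_of_mem_erase hS')).1 hne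
          _ ≤ ∑ S' ∈ W, (S ∆ S').card :=
              Finset.sum_le_sum_of_subset (Finset.erase_subset _ _)
      calc (δ + 1) * (t * (t - 1)) = ∑ _S ∈ W, (δ + 1) * (t - 1) := by
            rw [Finset.sum_const, smul_eq_mul]; ring
        _ ≤ ∑ S ∈ W, ∑ S' ∈ W, (S ∆ S').card := Finset.sum_le_sum hper
    -- combine
    have hsum_rw : ∑ a ∈ X \ A',
        min (wgt P (insert a A') B) (wgt P (insert a A') (insert a B))
        = ∑ a ∈ X \ A',
          min ((W.filter (fun S => a ∉ S)).card) ((W.filter (fun S => a ∈ S)).card) := by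
      refine Finset.sum_congr rfl fun a ha => ?_
      rw [f0 a ha, f1 a ha]
    have hmain : t * ((δ + 1) * (t - 1)) ≤ t * (2 * ∑ a ∈ X \ A',
        min ((W.filter (fun S => a ∉ S)).card) ((W.filter (fun S => a ∈ S)).card)) := by
      calc t * ((δ + 1) * (t - 1)) = (δ + 1) * (t * (t - 1)) := by ring
        _ ≤ ∑ S ∈ W, ∑ S' ∈ W, (S ∆ S').card := f6
        _ = 2 * (∑ S ∈ W, ∑ S' ∈ W, (S \ S').card) := f5.symm
        _ = 2 * ∑ a ∈ X \ A',
            ((W.filter (fun S => a ∈ S)).card * (W.filter (fun S => a ∉ S)).card) := by rw [f4]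
        _ ≤ 2 * ∑ a ∈ X \ A', (t * min ((W.filter (fun S => a ∉ S)).card)
              ((W.filter (fun S => a ∈ S)).card)) := by
            exact Nat.mul_le_mul_left 2 (Finset.sum_le_sum fun a _ => f3 a)
        _ = t * (2 * ∑ a ∈ X \ A', min ((W.filter (fun S => a ∉ S)).card)
              ((W.filter (fun S => a ∈ S)).card)) := by
            rw [← Finset.mul_sum]; ring
    have hcancel : (δ + 1) * (t - 1) ≤ 2 * ∑ a ∈ X \ A',
        min ((W.filter (fun S => a ∉ S)).card) ((W.filter (fun S => a ∈ S)).card) :=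
      Nat.le_of_mul_le_mul_left hmain (by omega)
    rw [hsum_rw]
    have ht : t - 1 + 1 = t := by omega
    have expand : (δ + 1) * t = (δ + 1) * (t - 1) + (δ + 1) := by
      conv_lhs => rw [← ht]
      ring
    calc (δ + 1) * t = (δ + 1) * (t - 1) + (δ + 1) := expand
      _ ≤ 2 * ∑ a ∈ X \ A', min ((W.filter (fun S => a ∉ S)).card)
            ((W.filter (fun S => a ∈ S)).card) + (δ + 1) := by
          exact Nat.add_le_add_right hcancel _
  have hfib : P.card = ∑ B ∈ P.image (· ∩ A'), (P.filter (fun S => S ∩ A' = B)).card :=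
    Finset.card_eq_sum_card_fiberwise (fun S hS => Finset.mem_image_of_mem _ hS)
  have hrw : ∀ a ∈ X \ A', mww P (insert a A') a
      = ∑ B ∈ P.image (· ∩ A'),
          min (wgt P (insert a A') B) (wgt P (insert a A') (insert a B)) := by
    intro a ha
    have haA' : a ∉ A' := (Finset.mem_sdiff.mp ha).2
    rw [mww, Finset.erase_insert haA']
  calc (δ + 1) * P.card
      = ∑ B ∈ P.image (· ∩ A'), (δ + 1) * (P.filter (fun S => S ∩ A' = B)).card := by
        rw [hfib, Finset.mul_sum]
    _ ≤ ∑ B ∈ P.image (· ∩ A'), (2 * (∑ a ∈ X \ A',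
          min (wgt P (insert a A') B) (wgt P (insert a A') (insert a B))) + (δ + 1)) :=
        Finset.sum_le_sum key
    _ = 2 * (∑ B ∈ P.image (· ∩ A'), ∑ a ∈ X \ A',
          min (wgt P (insert a A') B) (wgt P (insert a A') (insert a B)))
        + (δ + 1) * (P.image (· ∩ A')).card := by
        rw [Finset.sum_add_distrib, Finset.sum_const, smul_eq_mul, ← Finset.mul_sum]; ring
    _ = 2 * (∑ a ∈ X \ A', mww P (insert a A') a) + (δ + 1) * (P.image (· ∩ A')).card := by
        rw [Finset.sum_comm]
        congr 1
        congr 1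
        exact (Finset.sum_congr rfl hrw).symm

lemma double_count (X : Finset α) (s : ℕ) (hs : 1 ≤ s) (F : Finset α → α → ℕ) :
    ∑ A ∈ X.powersetCard s, ∑ a ∈ A, F A a
      = ∑ A' ∈ X.powersetCard (s - 1), ∑ a ∈ X \ A', F (insert a A') a := by
  classical
  rw [Finset.sum_sigma' (X.powersetCard s) (fun A => A) (fun A a => F A a),
    Finset.sum_sigma' (X.powersetCard (s - 1)) (fun A' => X \ A') (fun A' a => F (insert a A') a)]
  refine Finset.sum_bij' (fun q _ => (⟨q.1.erase q.2, q.2⟩ : Σ _ : Finset α, α))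
    (fun q _ => (⟨insert q.2 q.1, q.2⟩ : Σ _ : Finset α, α)) ?_ ?_ ?_ ?_ ?_
  · rintro ⟨A, a⟩ hq
    rw [Finset.mem_sigma] at hq ⊢
    obtain ⟨hA, ha⟩ := hq
    rw [Finset.mem_powersetCard] at hA ⊢
    refine ⟨⟨(Finset.erase_subset _ _).trans hA.1, by rw [Finset.card_erase_of_mem ha, hA.2]⟩, ?_⟩
    exact Finset.mem_sdiff.mpr ⟨hA.1 ha, Finset.notMem_erase _ _⟩
  · rintro ⟨A', a⟩ hq
    rw [Finset.mem_sigma] at hq ⊢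
    obtain ⟨hA', ha⟩ := hq
    obtain ⟨haX, haA'⟩ := Finset.mem_sdiff.mp ha
    rw [Finset.mem_powersetCard] at hA' ⊢
    refine ⟨⟨Finset.insert_subset haX hA'.1, ?_⟩, Finset.mem_insert_self _ _⟩
    rw [Finset.card_insert_of_notMem haA', hA'.2]
    omega
  · rintro ⟨A, a⟩ hq
    rw [Finset.mem_sigma] at hq
    simp only
    congr 1
    exact Finset.insert_erase hq.2
  · rintro ⟨A', a⟩ hq
    rw [Finset.mem_sigma] at hq
    simp only
    congr 1
    exact Finset.erase_insert (Finset.mem_sdiff.mp hq.2).2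
  · rintro ⟨A, a⟩ hq
    rw [Finset.mem_sigma] at hq
    simp only
    rw [Finset.insert_erase hq.2]

lemma exists_v (d C : ℝ) (hd : 1 < d) (hC : 0 < C) :
    ∃ v : ℕ, 1 ≤ v ∧ ∀ m : ℕ, v < m → C * (m : ℝ) ^ d < 2 ^ m := by
  have htend := tendsto_pow_const_div_const_pow_of_one_lt ⌈d⌉₊ (one_lt_two (α := ℝ))
  have hinv : (0:ℝ) < C⁻¹ := by positivity
  have hev : ∀ᶠ (m : ℕ) in Filter.atTop, (m:ℝ) ^ ⌈d⌉₊ / 2 ^ m < C⁻¹ :=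
    htend.eventually (gt_mem_nhds hinv)
  obtain ⟨Nb, hNb⟩ := Filter.eventually_atTop.mp hev
  refine ⟨max Nb 1, le_max_right _ _, ?_⟩
  intro m hm
  have hm1 : 1 ≤ m := by
    have := le_max_right Nb 1
    omega
  have hmN : Nb ≤ m := by
    have := le_max_left Nb 1
    omega
  have h1 : (m:ℝ) ^ ⌈d⌉₊ / 2 ^ m < C⁻¹ := hNb m hmN
  have h2pos : (0:ℝ) < 2 ^ m := by positivity
  have h2 : (m:ℝ) ^ ⌈d⌉₊ < C⁻¹ * 2 ^ m := by
    rw [div_lt_iff₀ h2pos] at h1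
    exact h1
  have h3 : (m:ℝ) ^ d ≤ (m:ℝ) ^ ⌈d⌉₊ := by
    rw [← Real.rpow_natCast (m:ℝ) ⌈d⌉₊]
    apply Real.rpow_le_rpow_of_exponent_le
    · exact_mod_cast hm1
    · exact Nat.le_ceil d
  calc C * (m:ℝ) ^ d ≤ C * (m:ℝ) ^ ⌈d⌉₊ := by
        exact mul_le_mul_of_nonneg_left h3 hC.le
    _ < C * (C⁻¹ * 2 ^ m) := by
        exact mul_lt_mul_of_pos_left h2 hC
    _ = 2 ^ m := by
        field_simp

end HausslerPack

open scoped symmDiff in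
open HausslerPack in
/-- Packing Lemma of Haussler/Chazelle. -/
theorem stmt2 (d C : ℝ) (hd : 1 < d) (hC : 0 < C) :
    ∃ K : ℝ, 0 < K ∧
      ∀ (α : Type) [DecidableEq α] (X : Finset α) (𝒮 : Finset (Finset α)),
        (∀ S ∈ 𝒮, S ⊆ X) →
        (∀ Y ⊆ X, 1 ≤ Y.card →
          ((𝒮.image (· ∩ Y)).card : ℝ) ≤ C * (Y.card : ℝ) ^ d) →
        ∀ δ : ℕ, 1 ≤ δ → δ ≤ X.card →
          ∀ P : Finset (Finset α), P ⊆ 𝒮 →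
            (∀ S₁ ∈ P, ∀ S₂ ∈ P, S₁ ≠ S₂ → δ < (S₁ ∆ S₂).card) →
            (P.card : ℝ) ≤ K * ((X.card : ℝ) / (δ : ℝ)) ^ d := by
  classical
  obtain ⟨v, hv1, hv⟩ := HausslerPack.exists_v d C hd hC
  have hd0 : (0:ℝ) ≤ d := by linarith
  have hvR : (1:ℝ) ≤ (v:ℝ) := by exact_mod_cast hv1
  have h8v : (0:ℝ) < 8 * (v:ℝ) := by linarith
  have hKpos : (0:ℝ) < 2 * C * (8 * (v:ℝ)) ^ d := by
    have := Real.rpow_pos_of_pos h8v d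
    positivity
  refine ⟨2 * C * (8 * (v:ℝ)) ^ d, hKpos, ?_⟩
  intro α _ X 𝒮 h𝒮 hπ δ hδ1 hδn P hP𝒮 hsep
  set n := X.card with hn
  have hn1 : 1 ≤ n := le_trans hδ1 hδn
  have hδpos : 0 < δ := hδ1
  have hnR : (0:ℝ) < (n:ℝ) := by exact_mod_cast hn1
  have hδR : (0:ℝ) < (δ:ℝ) := by exact_mod_cast hδpos
  have hratP : (0:ℝ) ≤ ((n:ℝ)/(δ:ℝ)) ^ d := Real.rpow_nonneg (by positivity) d
  have hPX : ∀ S ∈ P, S ⊆ X := fun S hS => h𝒮 S (hP𝒮 hS)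
  -- bounded shattering
  have hshOK : ∀ A, A ⊆ X → ∀ Q ⊆ P.image (· ∩ A), HausslerPack.shOK A Q v := by
    intro A hAX Q hQ Z hZA hshat
    by_contra hlt
    push_neg at hlt
    have hZ1 : 1 ≤ Z.card := by omega
    have hpow : Z.powerset ⊆ 𝒮.image (· ∩ Z) := by
      intro Wset hW
      obtain ⟨T, hTQ, hTZ⟩ := hshat Wset (Finset.mem_powerset.mp hW)
      obtain ⟨S, hSP, rfl⟩ := Finset.mem_image.mp (hQ hTQ)
      refine Finset.mem_image.mpr ⟨S, hP𝒮 hSP, ?_⟩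
      show S ∩ Z = Wset
      rw [← hTZ]
      show S ∩ Z = S ∩ A ∩ Z
      rw [Finset.inter_assoc, Finset.inter_eq_right.mpr hZA]
    have hcard : (2:ℝ) ^ Z.card ≤ C * (Z.card:ℝ) ^ d := by
      have h1 := hπ Z (hZA.trans hAX) hZ1
      have h2 : ((Z.powerset.card : ℕ) : ℝ) ≤ (((𝒮.image (· ∩ Z)).card : ℕ) : ℝ) := by
        exact_mod_cast Finset.card_le_card hpow
      rw [Finset.card_powerset] at h2
      calc (2:ℝ) ^ Z.card = ((2 ^ Z.card : ℕ) : ℝ) := by push_cast; ring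
        _ ≤ _ := h2
        _ ≤ C * (Z.card:ℝ) ^ d := h1
    exact absurd hcard (not_le.mpr (hv Z.card hlt))
  -- trivial bound
  have htriv : (P.card : ℝ) ≤ C * (n:ℝ) ^ d := by
    have himg : P.image (· ∩ X) = P := by
      have he : ∀ S ∈ P, S ∩ X = S := fun S hS => Finset.inter_eq_left.mpr (hPX S hS)
      ext T
      constructor
      · intro hT
        obtain ⟨S, hS, rfl⟩ := Finset.mem_image.mp hT
        rw [he S hS]
        exact hS
      · intro hT
        exact Finset.mem_image.mpr ⟨T, hT, he T hT⟩
    have h2 : (P.image (· ∩ X)).card ≤ (𝒮.image (· ∩ X)).card :=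
      Finset.card_le_card (Finset.image_subset_image hP𝒮)
    rw [himg] at h2
    calc (P.card:ℝ) ≤ (((𝒮.image (· ∩ X)).card : ℕ):ℝ) := by exact_mod_cast h2
      _ ≤ C * (n:ℝ) ^ d := hπ X (subset_refl X) hn1
  by_cases hcase : δ < 8 * v
  · -- trivial case
    have hδ8v : (δ:ℝ) ≤ 8 * (v:ℝ) := by exact_mod_cast le_of_lt hcase
    have hnd : (n:ℝ) = (δ:ℝ) * ((n:ℝ)/(δ:ℝ)) := by field_simp
    have hstep : (n:ℝ) ^ d ≤ (8*(v:ℝ)) ^ d * ((n:ℝ)/(δ:ℝ)) ^ d := by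
      calc (n:ℝ) ^ d = ((δ:ℝ) * ((n:ℝ)/(δ:ℝ))) ^ d := by rw [← hnd]
        _ = (δ:ℝ) ^ d * ((n:ℝ)/(δ:ℝ)) ^ d := Real.mul_rpow hδR.le (div_nonneg hnR.le hδR.le)
        _ ≤ (8*(v:ℝ)) ^ d * ((n:ℝ)/(δ:ℝ)) ^ d :=
            mul_le_mul_of_nonneg_right (Real.rpow_le_rpow hδR.le hδ8v hd0) hratP
    calc (P.card:ℝ) ≤ C * (n:ℝ) ^ d := htriv
      _ ≤ C * ((8*(v:ℝ)) ^ d * ((n:ℝ)/(δ:ℝ)) ^ d) := mul_le_mul_of_nonneg_left hstep hC.le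
      _ = (C * (8*(v:ℝ)) ^ d) * ((n:ℝ)/(δ:ℝ)) ^ d := by ring
      _ ≤ (2 * C * (8*(v:ℝ)) ^ d) * ((n:ℝ)/(δ:ℝ)) ^ d := by
          apply mul_le_mul_of_nonneg_right ?_ hratP
          nlinarith [Real.rpow_pos_of_pos h8v d]
  · -- main case
    push_neg at hcase
    set s := 4*v*n/δ + 1 with hs
    have hs1 : 1 ≤ 4*v*n/δ := by
      rw [Nat.one_le_div_iff hδpos]
      calc δ ≤ n := hδn
        _ ≤ 4*v*n := by
            have : 1 * n ≤ (4*v) * n := Nat.mul_le_mul_right n (by omega)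
            omega
    have hv8 : 8 ≤ δ := le_trans (by omega) hcase
    have hn8 : 8 ≤ n := le_trans hv8 hδn
    have hsn : s ≤ n := by
      have h1 : 4*v*n/δ ≤ 4*v*n/(8*v) := Nat.div_le_div_left hcase (by omega)
      have h2 : 4*v*n/(8*v) = n/2 := by
        have e1 : 4*v*n = (4*v)*n := by ring
        have e2 : 8*v = (4*v)*2 := by ring
        rw [e1, e2, Nat.mul_div_mul_left _ _ (by omega : 0 < 4*v)]
      have h3 : n/2 + 1 ≤ n := by omega
      omega
    have hsδ : 4*v*n < s*δ := by
      have h1 := Nat.div_add_mod (4*v*n) δ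
      have h2 := Nat.mod_lt (4*v*n) hδpos
      calc 4*v*n = δ*(4*v*n/δ) + (4*v*n)%δ := h1.symm
        _ < δ*(4*v*n/δ) + δ := by omega
        _ = s*δ := by rw [hs]; ring
    have hs1' : s - 1 = 4*v*n/δ := by omega
    clear_value s
    set N := (X.powersetCard s).card with hNdef
    set N' := (X.powersetCard (s-1)).card with hN'def
    have hNc : N = n.choose s := by rw [hNdef, Finset.card_powersetCard]
    have hN'c : N' = n.choose (s-1) := by rw [hN'def, Finset.card_powersetCard]
    have hN'pos : 0 < N' := by
      rw [hN'c]
      exact Nat.choose_pos (by omega)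
    have hrel : N * s = N' * (n - (s-1)) := by
      have h1 := Nat.choose_succ_right_eq n (s-1)
      have hss : s - 1 + 1 = s := by omega
      rw [hss] at h1
      rw [hNc, hN'c, h1]
    have ineq1 : ∑ A ∈ X.powersetCard s, ∑ a ∈ A, mww P A a ≤ N * (v * P.card) := by
      calc ∑ A ∈ X.powersetCard s, ∑ a ∈ A, mww P A a
          ≤ ∑ _A ∈ X.powersetCard s, v * P.card :=
            Finset.sum_le_sum (fun A hA => sum_mww_le v A P
              (fun Q hQ => hshOK A (Finset.mem_powersetCard.mp hA).1 Q hQ))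
        _ = N * (v * P.card) := by rw [Finset.sum_const, smul_eq_mul]
    have ineq2 : (δ+1) * P.card * N' ≤ 2*(N*(v*P.card))
        + (δ+1) * ∑ A' ∈ X.powersetCard (s-1), (P.image (· ∩ A')).card := by
      have h1 : ∀ A' ∈ X.powersetCard (s-1), (δ+1)*P.card ≤
          2*(∑ a ∈ X \ A', mww P (insert a A') a) + (δ+1)*(P.image (· ∩ A')).card :=
        fun A' _ => perA' X P δ hPX hsep A'
      calc (δ+1)*P.card*N' = ∑ _A' ∈ X.powersetCard (s-1), (δ+1)*P.card := by
            rw [Finset.sum_const, smul_eq_mul]; ring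
        _ ≤ ∑ A' ∈ X.powersetCard (s-1), (2*(∑ a ∈ X \ A', mww P (insert a A') a)
              + (δ+1)*(P.image (· ∩ A')).card) := Finset.sum_le_sum h1
        _ = 2*(∑ A' ∈ X.powersetCard (s-1), ∑ a ∈ X \ A', mww P (insert a A') a)
              + (δ+1)*∑ A' ∈ X.powersetCard (s-1), (P.image (· ∩ A')).card := by
            rw [Finset.sum_add_distrib, ← Finset.mul_sum, ← Finset.mul_sum]
        _ = 2*(∑ A ∈ X.powersetCard s, ∑ a ∈ A, mww P A a)
              + (δ+1)*∑ A' ∈ X.powersetCard (s-1), (P.image (· ∩ A')).card := by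
            rw [← double_count X s (by omega) (fun A a => mww P A a)]
        _ ≤ 2*(N*(v*P.card))
              + (δ+1)*∑ A' ∈ X.powersetCard (s-1), (P.image (· ∩ A')).card := by
            have h2 := Nat.mul_le_mul_left 2 ineq1
            omega
    -- bound the trace counts
    have hq : ∀ A' ∈ X.powersetCard (s-1),
        (((P.image (· ∩ A')).card : ℕ) : ℝ) ≤ C * (((s-1 : ℕ)):ℝ) ^ d := by
      intro A' hA'
      obtain ⟨hsub, hcard⟩ := Finset.mem_powersetCard.mp hA'
      have h2 : (P.image (· ∩ A')).card ≤ (𝒮.image (· ∩ A')).card :=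
        Finset.card_le_card (Finset.image_subset_image hP𝒮)
      have h3 := hπ A' hsub (by omega)
      rw [hcard] at h3
      calc (((P.image (· ∩ A')).card : ℕ):ℝ) ≤ (((𝒮.image (· ∩ A')).card : ℕ):ℝ) := by
            exact_mod_cast h2
        _ ≤ C * (((s-1:ℕ)):ℝ) ^ d := h3
    have hqsum : ((∑ A' ∈ X.powersetCard (s-1), (P.image (· ∩ A')).card : ℕ) : ℝ)
        ≤ (N':ℝ) * (C * (((s-1:ℕ)):ℝ) ^ d) := by
      push_cast
      calc ∑ A' ∈ X.powersetCard (s-1), (((P.image (· ∩ A')).card : ℕ):ℝ)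
          ≤ ∑ _A' ∈ X.powersetCard (s-1), C * (((s-1:ℕ)):ℝ) ^ d := Finset.sum_le_sum hq
        _ = (N':ℝ) * (C * (((s-1:ℕ)):ℝ) ^ d) := by rw [Finset.sum_const, nsmul_eq_mul]
    -- real assembly
    set p := P.card with hp
    clear_value p
    have R1 : ((δ:ℝ)+1) * (p:ℝ) * (N':ℝ)
        ≤ 2*((N:ℝ)*((v:ℝ)*(p:ℝ))) + ((δ:ℝ)+1) * ((N':ℝ) * (C * (((s-1:ℕ)):ℝ) ^ d)) := by
      have hcast : ((δ:ℝ)+1) * (p:ℝ) * (N':ℝ) ≤ 2*((N:ℝ)*((v:ℝ)*(p:ℝ)))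
          + ((δ:ℝ)+1) * ((∑ A' ∈ X.powersetCard (s-1), (P.image (· ∩ A')).card : ℕ):ℝ) := by
        exact_mod_cast ineq2
      refine le_trans hcast ?_
      have := mul_le_mul_of_nonneg_left hqsum (by positivity : (0:ℝ) ≤ (δ:ℝ)+1)
      linarith
    have hNs : (N:ℝ)*(s:ℝ) = (N':ℝ)*(((n - (s-1)):ℕ):ℝ) := by exact_mod_cast hrel
    have hns : (((n - (s-1)):ℕ):ℝ) ≤ (n:ℝ) := by exact_mod_cast Nat.sub_le n (s-1)
    have hsδR : 4*(v:ℝ)*(n:ℝ) ≤ (s:ℝ)*(δ:ℝ) := by exact_mod_cast le_of_lt hsδ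
    have hspos : (0:ℝ) < (s:ℝ) := by
      have : 1 ≤ s := by omega
      exact_mod_cast this
    have hpN' : (0:ℝ) ≤ (p:ℝ)*(N':ℝ) := by positivity
    have hN'R : (0:ℝ) < (N':ℝ) := by exact_mod_cast hN'pos
    set s1 := (((s-1:ℕ)):ℝ) with hs1R
    have hkey : (p:ℝ) ≤ 2 * C * s1 ^ d := by
      have c0 : (0:ℝ) < (s:ℝ)*(((δ:ℝ)+1)*(N':ℝ)) := by positivity
      have e1 : (s:ℝ)*(((δ:ℝ)+1) * (p:ℝ) * (N':ℝ))
          ≤ (s:ℝ)*(2*((N:ℝ)*((v:ℝ)*(p:ℝ)))) + (s:ℝ)*(((δ:ℝ)+1) * ((N':ℝ) * (C * s1 ^ d))) := by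
        have := mul_le_mul_of_nonneg_left R1 hspos.le
        linarith [this]
      have e2 : (s:ℝ)*(2*((N:ℝ)*((v:ℝ)*(p:ℝ)))) = 2*(v:ℝ)*(p:ℝ)*((N:ℝ)*(s:ℝ)) := by ring
      have e3 : 2*(v:ℝ)*(p:ℝ)*((N:ℝ)*(s:ℝ)) ≤ 2*(v:ℝ)*(p:ℝ)*((N':ℝ)*(n:ℝ)) := by
        rw [hNs]
        have h4 : (N':ℝ)*(((n - (s-1)):ℕ):ℝ) ≤ (N':ℝ)*(n:ℝ) :=
          mul_le_mul_of_nonneg_left hns hN'R.le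
        have h5 : (0:ℝ) ≤ 2*(v:ℝ)*(p:ℝ) := by positivity
        exact mul_le_mul_of_nonneg_left h4 h5
      have e4 : 2*(v:ℝ)*(p:ℝ)*((N':ℝ)*(n:ℝ)) ≤ (s:ℝ)*((δ:ℝ)+1)*((p:ℝ)*(N':ℝ))/2 := by
        have h6 : (4*(v:ℝ)*(n:ℝ))*((p:ℝ)*(N':ℝ)) ≤ ((s:ℝ)*(δ:ℝ))*((p:ℝ)*(N':ℝ)) :=
          mul_le_mul_of_nonneg_right hsδR hpN'
        have h7 : ((s:ℝ)*(δ:ℝ))*((p:ℝ)*(N':ℝ)) ≤ ((s:ℝ)*((δ:ℝ)+1))*((p:ℝ)*(N':ℝ)) := by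
          have h8 : (s:ℝ)*(δ:ℝ) ≤ (s:ℝ)*((δ:ℝ)+1) :=
            mul_le_mul_of_nonneg_left (by linarith) hspos.le
          exact mul_le_mul_of_nonneg_right h8 hpN'
        calc 2*(v:ℝ)*(p:ℝ)*((N':ℝ)*(n:ℝ)) = (4*(v:ℝ)*(n:ℝ))*((p:ℝ)*(N':ℝ))/2 := by ring
          _ ≤ ((s:ℝ)*((δ:ℝ)+1))*((p:ℝ)*(N':ℝ))/2 := by linarith
          _ = (s:ℝ)*((δ:ℝ)+1)*((p:ℝ)*(N':ℝ))/2 := by ring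
      have e5 : (s:ℝ)*(((δ:ℝ)+1)*(N':ℝ))*(p:ℝ)
          ≤ (s:ℝ)*(((δ:ℝ)+1)*(N':ℝ))*((p:ℝ)/2 + C * s1 ^ d) := by linarith [e1, e2, e3, e4]
      have e6 : (p:ℝ) ≤ (p:ℝ)/2 + C * s1 ^ d := le_of_mul_le_mul_left e5 c0
      have hCs : (0:ℝ) ≤ C * s1 ^ d := by
        have : (0:ℝ) ≤ s1 ^ d := Real.rpow_nonneg (by positivity) d
        positivity
      linarith
    -- finish: s1 ≤ 4vn/δ
    have hs1le : s1 ≤ 4*(v:ℝ)*(n:ℝ)/(δ:ℝ) := by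
      rw [hs1R, hs1']
      calc (((4*v*n/δ : ℕ)):ℝ) ≤ ((4*v*n : ℕ):ℝ)/((δ:ℕ):ℝ) := Nat.cast_div_le
        _ = 4*(v:ℝ)*(n:ℝ)/(δ:ℝ) := by push_cast; ring
    have hfin : s1 ^ d ≤ (8*(v:ℝ)) ^ d * ((n:ℝ)/(δ:ℝ)) ^ d := by
      have h8 : 4*(v:ℝ)*(n:ℝ)/(δ:ℝ) = (4*(v:ℝ)) * ((n:ℝ)/(δ:ℝ)) := by ring
      have hs1nn : (0:ℝ) ≤ s1 := by rw [hs1R]; exact Nat.cast_nonneg _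
      calc s1 ^ d ≤ (4*(v:ℝ)*(n:ℝ)/(δ:ℝ)) ^ d :=
            Real.rpow_le_rpow hs1nn hs1le hd0
        _ = ((4*(v:ℝ)) * ((n:ℝ)/(δ:ℝ))) ^ d := by rw [h8]
        _ = (4*(v:ℝ)) ^ d * ((n:ℝ)/(δ:ℝ)) ^ d := Real.mul_rpow (by positivity) (by positivity)
        _ ≤ (8*(v:ℝ)) ^ d * ((n:ℝ)/(δ:ℝ)) ^ d := by
            apply mul_le_mul_of_nonneg_right ?_ hratP
            apply Real.rpow_le_rpow (by positivity) (by linarith) hd0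
    calc (p:ℝ) ≤ 2 * C * s1 ^ d := hkey
      _ ≤ 2 * C * ((8*(v:ℝ)) ^ d * ((n:ℝ)/(δ:ℝ)) ^ d) := by
          apply mul_le_mul_of_nonneg_left hfin (by positivity)
      _ = 2 * C * (8*(v:ℝ)) ^ d * ((n:ℝ)/(δ:ℝ)) ^ d := by ring
end

section
/- Let d > 1, K > 0, and ν > 0 be real constants. Let X' be a finite set partitioned into two disjoint subsets Y and Y', with m = |X'| ≥ 2 and |Y| ≥ 1, and suppose |Y| = m·(1 + δ)/2 where 0 ≤ δ ≤ K·(log₂ m)^{3/2 + 1/(2d)} / m^{1/2 + 1/(2d)}. Let S be a finite set such that | |S ∩ Y| − |S ∩ Y'| | ≤ K · |S ∩ X'|^{1/2 − 1/(2d)} · (log₂ m)^{3/2 + 1/(2d)}. Writing p = |S ∩ X'|/m and q = |S ∩ Y|/|Y|, one has d_ν(p, q) ≤ K·(log₂ m)^{3/2 + 1/(2d)} / (ν·m)^{1/2 + 1/(2d)} + δ. -/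
set_option maxHeartbeats 1000000


/-- the `d_ν`-distance bound for one halving step.
Let `d > 1`, `K > 0`, `ν > 0`. Let `X'` be a finite set partitioned into disjoint `Y`,
`Y'` with `m = |X'| ≥ 2`, `|Y| ≥ 1`, `|Y| = m·(1 + δ)/2` where
`0 ≤ δ ≤ K·(log₂ m)^{3/2 + 1/(2d)} / m^{1/2 + 1/(2d)}`. Let `S` be a finite set with
`| |S ∩ Y| − |S ∩ Y'| | ≤ K·|S ∩ X'|^{1/2 − 1/(2d)}·(log₂ m)^{3/2 + 1/(2d)}`. Writing
`p = |S ∩ X'|/m` and `q = |S ∩ Y|/|Y|`, one has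
`d_ν(p, q) ≤ K·(log₂ m)^{3/2 + 1/(2d)} / (ν·m)^{1/2 + 1/(2d)} + δ`, where
`d_ν(r, s) = |r − s| / (r + s + ν)`. -/
theorem stmt17 {α : Type*} [DecidableEq α] (d K ν : ℝ) (hd : 1 < d) (hK : 0 < K)
    (hν : 0 < ν) (X' Y Y' : Finset α) (hdisj : Disjoint Y Y') (hunion : X' = Y ∪ Y')
    (hm : 2 ≤ X'.card) (hY : 1 ≤ Y.card) (δ : ℝ) (hδ0 : 0 ≤ δ)
    (hδ1 : δ ≤ K * Real.logb 2 (X'.card : ℝ) ^ ((3 : ℝ) / 2 + 1 / (2 * d)) /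
      (X'.card : ℝ) ^ ((1 : ℝ) / 2 + 1 / (2 * d)))
    (hYcard : (Y.card : ℝ) = (X'.card : ℝ) * (1 + δ) / 2)
    (S : Finset α)
    (hdisc : |((S ∩ Y).card : ℝ) - ((S ∩ Y').card : ℝ)| ≤
      K * ((S ∩ X').card : ℝ) ^ ((1 : ℝ) / 2 - 1 / (2 * d)) *
        Real.logb 2 (X'.card : ℝ) ^ ((3 : ℝ) / 2 + 1 / (2 * d))) :
    |((S ∩ X').card : ℝ) / (X'.card : ℝ) - ((S ∩ Y).card : ℝ) / (Y.card : ℝ)| /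
        (((S ∩ X').card : ℝ) / (X'.card : ℝ) + ((S ∩ Y).card : ℝ) / (Y.card : ℝ) + ν) ≤
      K * Real.logb 2 (X'.card : ℝ) ^ ((3 : ℝ) / 2 + 1 / (2 * d)) /
        (ν * (X'.card : ℝ)) ^ ((1 : ℝ) / 2 + 1 / (2 * d)) + δ := by
  set m : ℝ := (X'.card : ℝ) with hm_def
  set a : ℝ := ((S ∩ X').card : ℝ) with ha_def
  set b : ℝ := ((S ∩ Y).card : ℝ) with hb_def
  set c : ℝ := ((S ∩ Y').card : ℝ) with hc_def
  set n : ℝ := (Y.card : ℝ) with hn_def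
  set L : ℝ := Real.logb 2 m with hL_def
  set γ : ℝ := (3 : ℝ) / 2 + 1 / (2 * d) with hγ_def
  set A : ℝ := (1 : ℝ) / 2 + 1 / (2 * d) with hA_def
  set B : ℝ := (1 : ℝ) / 2 - 1 / (2 * d) with hB_def
  have hd0 : (0 : ℝ) < 1 / (2 * d) := by positivity
  have hd1 : 1 / (2 * d) < 1 / 2 := by
    apply div_lt_div_of_pos_left one_pos (by norm_num) (by linarith)
  have hA0 : 0 < A := by rw [hA_def]; linarith
  have hA1 : A < 1 := by rw [hA_def]; linarith
  have hB0 : 0 < B := by rw [hB_def]; linarith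
  have hAB : B + A = 1 := by rw [hA_def, hB_def]; ring
  have hm2 : (2 : ℝ) ≤ m := by rw [hm_def]; exact_mod_cast hm
  have hm0 : (0 : ℝ) < m := by linarith
  have hn1 : (1 : ℝ) ≤ n := by rw [hn_def]; exact_mod_cast hY
  have hn0 : (0 : ℝ) < n := by linarith
  have ha0 : 0 ≤ a := by rw [ha_def]; positivity
  have hb0 : 0 ≤ b := by rw [hb_def]; positivity
  have hc0 : 0 ≤ c := by rw [hc_def]; positivity
  have habc : a = b + c := by
    rw [ha_def, hb_def, hc_def]
    have h1 : S ∩ X' = (S ∩ Y) ∪ (S ∩ Y') := by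
      rw [hunion, Finset.inter_union_distrib_left]
    have h2 : Disjoint (S ∩ Y) (S ∩ Y') := hdisj.mono inf_le_right inf_le_right
    rw [h1, Finset.card_union_of_disjoint h2]
    push_cast
    ring
  have hba : b ≤ a := by linarith
  have hL1 : (1 : ℝ) ≤ L := by
    have := Real.logb_le_logb_of_le (one_lt_two) (by norm_num : (0:ℝ) < 2) hm2
    simpa [Real.logb_self_eq_one] using this
  have hL0 : 0 < L := by linarith
  have hLγ : 0 ≤ L ^ γ := Real.rpow_nonneg (le_of_lt hL0) γ
  have hνm : 0 < ν * m := mul_pos hν hm0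
  clear_value m a b c n
  -- abbreviations for p, q, D
  set p : ℝ := a / m with hp_def
  set q : ℝ := b / n with hq_def
  have hp0 : 0 ≤ p := div_nonneg ha0 hm0.le
  have hq0 : 0 ≤ q := div_nonneg hb0 hn0.le
  set D : ℝ := p + q + ν with hD_def
  have hD0 : 0 < D := by rw [hD_def]; linarith
  clear_value L γ A B p q D
  have hmD0 : 0 < m * D := mul_pos hm0 hD0
  -- Step 1: |p - q| ≤ (|a - 2*b| + a*δ)/m
  have h1p : 1 + δ > 0 := by linarith
  have hstep1 : |p - q| ≤ (|a - 2 * b| + a * δ) / m := by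
    have hpq : p - q = (a * (1 + δ) - 2 * b) / (m * (1 + δ)) := by
      rw [hp_def, hq_def, hYcard]
      field_simp
    have habs : |p - q| = |a * (1 + δ) - 2 * b| / (m * (1 + δ)) := by
      rw [hpq, abs_div, abs_of_pos (mul_pos hm0 h1p)]
    rw [habs]
    have hnum : |a * (1 + δ) - 2 * b| ≤ |a - 2 * b| + a * δ := by
      have : a * (1 + δ) - 2 * b = (a - 2 * b) + a * δ := by ring
      rw [this]
      calc |(a - 2 * b) + a * δ| ≤ |a - 2 * b| + |a * δ| := abs_add_le _ _
        _ = |a - 2 * b| + a * δ := by rw [abs_of_nonneg (mul_nonneg ha0 hδ0)]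
    calc |a * (1 + δ) - 2 * b| / (m * (1 + δ))
        ≤ (|a - 2 * b| + a * δ) / (m * (1 + δ)) := by
          exact (div_le_div_iff_of_pos_right (mul_pos hm0 h1p)).mpr hnum
      _ ≤ (|a - 2 * b| + a * δ) / m := by
          have h := add_nonneg (abs_nonneg (a - 2 * b)) (mul_nonneg ha0 hδ0)
          have hmm : m ≤ m * (1 + δ) := by
            have := mul_nonneg hm0.le hδ0
            linarith [mul_add m 1 δ, mul_one m]
          exact div_le_div_of_nonneg_left h hm0 hmm
  -- Step 2: split
  have hstep2 : |p - q| / D ≤ |a - 2 * b| / (m * D) + (a * δ) / (m * D) := by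
    have : |p - q| / D ≤ ((|a - 2 * b| + a * δ) / m) / D :=
      (div_le_div_iff_of_pos_right hD0).mpr hstep1
    calc |p - q| / D ≤ ((|a - 2 * b| + a * δ) / m) / D := this
      _ = |a - 2 * b| / (m * D) + (a * δ) / (m * D) := by
          field_simp
  -- Step 3: the δ term
  have hstep3 : (a * δ) / (m * D) ≤ δ := by
    rw [div_le_iff₀ hmD0]
    have hpD : p ≤ D := by rw [hD_def]; linarith
    have hamD : a ≤ m * D := by
      have h1 : a / m ≤ D := hp_def ▸ hpD
      calc a = m * (a / m) := by field_simp
        _ ≤ m * D := mul_le_mul_of_nonneg_left h1 hm0.le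
    calc a * δ ≤ (m * D) * δ := mul_le_mul_of_nonneg_right hamD hδ0
      _ = δ * (m * D) := by ring
  -- Step 4: the main term
  have hdisc' : |a - 2 * b| ≤ K * a ^ B * L ^ γ := by
    have : a - 2 * b = -(b - c) := by rw [habc]; ring
    rw [this, abs_neg]
    exact hdisc
  have hgm : a ^ B * (ν * m) ^ A ≤ a + ν * m := by
    have := Real.geom_mean_le_arith_mean2_weighted (le_of_lt hB0) (le_of_lt hA0)
      ha0 (le_of_lt hνm) hAB
    have hBa : B * a ≤ 1 * a := mul_le_mul_of_nonneg_right (by linarith) ha0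
    have hAν : A * (ν * m) ≤ 1 * (ν * m) := mul_le_mul_of_nonneg_right (by linarith) hνm.le
    linarith
  have hνmA : 0 < (ν * m) ^ A := Real.rpow_pos_of_pos hνm A
  have hstep4 : |a - 2 * b| / (m * D) ≤ K * L ^ γ / (ν * m) ^ A := by
    rw [div_le_div_iff₀ hmD0 hνmA]
    have haB : 0 ≤ a ^ B := Real.rpow_nonneg ha0 B
    have h1 : |a - 2 * b| * (ν * m) ^ A ≤ K * a ^ B * L ^ γ * (ν * m) ^ A := by
      apply mul_le_mul_of_nonneg_right hdisc' hνmA.le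
    have h2 : K * a ^ B * L ^ γ * (ν * m) ^ A ≤ K * L ^ γ * (a + ν * m) := by
      calc K * a ^ B * L ^ γ * (ν * m) ^ A = (K * L ^ γ) * (a ^ B * (ν * m) ^ A) := by ring
        _ ≤ (K * L ^ γ) * (a + ν * m) := mul_le_mul_of_nonneg_left hgm (mul_nonneg hK.le hLγ)
        _ = K * L ^ γ * (a + ν * m) := by ring
    have h3 : a + ν * m ≤ m * D := by
      have : m * D = a + m * q + ν * m := by
        rw [hD_def, hp_def]
        field_simp
      linarith [mul_nonneg hm0.le hq0]
    have h4 : K * L ^ γ * (a + ν * m) ≤ K * L ^ γ * (m * D) := by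
      apply mul_le_mul_of_nonneg_left h3 (mul_nonneg hK.le hLγ)
    linarith
  calc |p - q| / D ≤ |a - 2 * b| / (m * D) + (a * δ) / (m * D) := hstep2
    _ ≤ K * L ^ γ / (ν * m) ^ A + δ := add_le_add hstep4 hstep3
end
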